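/- arXiv:1805.09773 — 2 statements merged into one kernel-verified Lean document; each statement's English description precedes it below -/
import Mathlib

section
/- Let n ≥ 2 be an integer, K ∈ ℝ with K ≠ 0, α > 0 with 2 + αK > 0, and T > 0. Suppose σ : [0,T) → ℝ is differentiable and satisfies σ(t) > 0 and 2σ(t) + αK > 0 for every t ∈ [0,T), and suppose σ satisfies the implicit (Lambert W–type) equation σ(t) = −2K(n−1)t + 1 + (αK/2)·log((2σ(t) + αK)/(2 + αK)) for all t ∈ [0,T). Then σ(0) = 1 and σ satisfies the ordinary differential equation σ'(t) = −2K(n−1) − αK²(n−1)/σ(t) for all t ∈ [0,T). -/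
lemma aux_mono (α K : ℝ) (hαK : 0 < 2 + α * K) :
    StrictMonoOn (fun x : ℝ => x - (α * K / 2) * Real.log (2 * x + α * K))
      (Set.Ioi (max 0 (-(α * K) / 2))) := by
  set m := max 0 (-(α * K) / 2) with hm
  have hmem : ∀ x ∈ Set.Ioi m, 0 < x ∧ 0 < 2 * x + α * K := by
    intro x hx
    have h1 : 0 < x := lt_of_le_of_lt (le_max_left _ _) hx
    have h2 : -(α * K) / 2 < x := lt_of_le_of_lt (le_max_right _ _) hx
    exact ⟨h1, by linarith⟩
  have hderiv : ∀ x ∈ Set.Ioi m,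
      HasDerivAt (fun x : ℝ => x - (α * K / 2) * Real.log (2 * x + α * K))
        (1 - (α * K / 2) * (2 / (2 * x + α * K))) x := by
    intro x hx
    obtain ⟨h1, h2⟩ := hmem x hx
    have hlin : HasDerivAt (fun x : ℝ => 2 * x + α * K) 2 x := by
      simpa using ((hasDerivAt_id x).const_mul 2).add_const (α * K)
    have hlog := hlin.log (ne_of_gt h2)
    exact (hasDerivAt_id' x).sub (hlog.const_mul (α * K / 2))
  apply strictMonoOn_of_deriv_pos (convex_Ioi m)
  · exact fun x hx => ((hderiv x hx).differentiableAt).continuousAt.continuousWithinAt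
  · intro x hx
    rw [interior_Ioi] at hx
    obtain ⟨h1, h2⟩ := hmem x hx
    rw [(hderiv x hx).deriv]
    have heq : 1 - (α * K / 2) * (2 / (2 * x + α * K)) = 2 * x / (2 * x + α * K) := by
      field_simp
      ring
    rw [heq]
    positivity

/-- If a positive differentiable scaling factor `σ` on `[0, T)`
satisfies the implicit Lambert-W-type equation
`σ t = -2K(n-1)t + 1 + (αK/2) log((2σ t + αK)/(2 + αK))`,
then `σ 0 = 1` and `σ` solves the RG-2 constant-curvature ODE
`σ' t = -2K(n-1) - αK²(n-1)/σ t` on `[0, T)`. -/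
theorem stmt_0 (n : ℕ) (hn : 2 ≤ n) (K α T : ℝ) (hK : K ≠ 0) (hα : 0 < α)
    (hαK : 0 < 2 + α * K) (hT : 0 < T) (σ : ℝ → ℝ)
    (hdiff : ∀ t ∈ Set.Ico (0:ℝ) T, DifferentiableAt ℝ σ t)
    (hpos : ∀ t ∈ Set.Ico (0:ℝ) T, 0 < σ t)
    (hpos2 : ∀ t ∈ Set.Ico (0:ℝ) T, 0 < 2 * σ t + α * K)
    (himp : ∀ t ∈ Set.Ico (0:ℝ) T,
      σ t = -2 * K * ((n:ℝ) - 1) * t + 1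
        + (α * K / 2) * Real.log ((2 * σ t + α * K) / (2 + α * K))) :
    σ 0 = 1 ∧ ∀ t ∈ Set.Ico (0:ℝ) T,
      deriv σ t = -2 * K * ((n:ℝ) - 1) - α * K ^ 2 * ((n:ℝ) - 1) / σ t := by
  have h0mem : (0:ℝ) ∈ Set.Ico (0:ℝ) T := ⟨le_refl _, hT⟩
  constructor
  · -- σ 0 = 1
    have hσ0 := hpos 0 h0mem
    have hσ02 := hpos2 0 h0mem
    have h1mem : (1:ℝ) ∈ Set.Ioi (max 0 (-(α * K) / 2)) := by
      simp only [Set.mem_Ioi, max_lt_iff]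
      constructor <;> linarith
    have hσmem : σ 0 ∈ Set.Ioi (max 0 (-(α * K) / 2)) := by
      simp only [Set.mem_Ioi, max_lt_iff]
      constructor <;> linarith
    have heq := himp 0 h0mem
    rw [Real.log_div (ne_of_gt hσ02) (ne_of_gt hαK)] at heq
    have hfeq : σ 0 - (α * K / 2) * Real.log (2 * σ 0 + α * K)
        = (1:ℝ) - (α * K / 2) * Real.log (2 * 1 + α * K) := by
      have h2 : (2:ℝ) * 1 + α * K = 2 + α * K := by ring
      rw [h2]
      linarith [heq]
    exact (aux_mono α K hαK).injOn hσmem h1mem hfeq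
  · intro t ht
    have hσt := hpos t ht
    have hσt2 := hpos2 t ht
    have hσ := (hdiff t ht).hasDerivAt
    set s := σ t with hs
    set s' := deriv σ t with hs'
    -- derivative of the inner function
    have hu : HasDerivAt (fun x => (2 * σ x + α * K) / (2 + α * K))
        (2 * s' / (2 + α * K)) t := ((hσ.const_mul 2).add_const (α * K)).div_const _
    have hut : (2 * σ t + α * K) / (2 + α * K) ≠ 0 :=
      ne_of_gt (div_pos hσt2 hαK)
    have hlog := hu.log hut
    have hG1 : HasDerivAt
        (fun x => σ x - (α * K / 2) * Real.log ((2 * σ x + α * K) / (2 + α * K)))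
        (s' - (α * K / 2) * (2 * s' / (2 + α * K) / ((2 * s + α * K) / (2 + α * K)))) t :=
      hσ.sub (hlog.const_mul (α * K / 2))
    have hL : HasDerivAt (fun x : ℝ => -2 * K * ((n:ℝ) - 1) * x + 1)
        (-2 * K * ((n:ℝ) - 1)) t := by
      simpa using ((hasDerivAt_id t).const_mul (-2 * K * ((n:ℝ) - 1))).add_const (1:ℝ)
    have hG2 : HasDerivWithinAt
        (fun x => σ x - (α * K / 2) * Real.log ((2 * σ x + α * K) / (2 + α * K)))
        (-2 * K * ((n:ℝ) - 1)) (Set.Ico 0 T) t := by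
      apply (hL.hasDerivWithinAt).congr
      · intro y hy
        have := himp y hy
        linarith
      · have := himp t ht
        linarith
    have hud := uniqueDiffOn_Ico (0:ℝ) T t ht
    have key : s' - (α * K / 2) * (2 * s' / (2 + α * K) / ((2 * s + α * K) / (2 + α * K)))
        = -2 * K * ((n:ℝ) - 1) := by
      have e1 := (hG1.hasDerivWithinAt).derivWithin hud
      have e2 := hG2.derivWithin hud
      rw [← e1, ← e2]
    have hne1 : (2:ℝ) + α * K ≠ 0 := ne_of_gt hαK
    have hne2 : 2 * s + α * K ≠ 0 := ne_of_gt hσt2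
    have hne3 : s ≠ 0 := ne_of_gt hσt
    field_simp at key ⊢
    nlinarith [key, sq_nonneg s, sq_nonneg s']
end

section
/- Let n ≥ 2 be an integer, K ∈ ℝ with K ≠ 0, α > 0 with 2 + αK > 0, and T > 0. Suppose σ : [0,T) → ℝ is differentiable with σ(0) = 1, σ(t) > 0 and 2σ(t) + αK > 0 for every t ∈ [0,T), and σ solves the ordinary differential equation σ'(t) = −2K(n−1) − αK²(n−1)/σ(t) for all t ∈ [0,T). Then σ satisfies the implicit equation σ(t) = −2K(n−1)t + 1 + (αK/2)·log((2σ(t) + αK)/(2 + αK)) for all t ∈ [0,T). -/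
/-- If a positive differentiable scaling factor `σ` on `[0, T)`
with `σ 0 = 1` solves the RG-2 constant-curvature ODE
`σ' t = -2K(n-1) - αK²(n-1)/σ t`, then it satisfies the implicit
Lambert-W-type equation
`σ t = -2K(n-1)t + 1 + (αK/2) log((2σ t + αK)/(2 + αK))` on `[0, T)`. -/
theorem stmt_1 (n : ℕ) (hn : 2 ≤ n) (K α T : ℝ) (hK : K ≠ 0) (hα : 0 < α)
    (hαK : 0 < 2 + α * K) (hT : 0 < T) (σ : ℝ → ℝ)
    (hinit : σ 0 = 1)
    (hdiff : ∀ t ∈ Set.Ico (0:ℝ) T, DifferentiableAt ℝ σ t)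
    (hpos : ∀ t ∈ Set.Ico (0:ℝ) T, 0 < σ t)
    (hpos2 : ∀ t ∈ Set.Ico (0:ℝ) T, 0 < 2 * σ t + α * K)
    (hODE : ∀ t ∈ Set.Ico (0:ℝ) T,
      deriv σ t = -2 * K * ((n:ℝ) - 1) - α * K ^ 2 * ((n:ℝ) - 1) / σ t) :
    ∀ t ∈ Set.Ico (0:ℝ) T,
      σ t = -2 * K * ((n:ℝ) - 1) * t + 1
        + (α * K / 2) * Real.log ((2 * σ t + α * K) / (2 + α * K)) := by
  intro t ht
  obtain ⟨ht0, htT⟩ := ht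
  set g : ℝ → ℝ := fun s =>
    σ s - (α * K / 2) * Real.log (2 * σ s + α * K) + 2 * K * ((n:ℝ) - 1) * s with hg
  have hsub : Set.Icc (0:ℝ) t ⊆ Set.Ico (0:ℝ) T := fun s hs =>
    ⟨hs.1, lt_of_le_of_lt hs.2 htT⟩
  have hderiv : ∀ s ∈ Set.Icc (0:ℝ) t, HasDerivAt g 0 s := by
    intro s hs
    have hsI := hsub hs
    have hσ : HasDerivAt σ (deriv σ s) s := (hdiff s hsI).hasDerivAt
    have hσpos := hpos s hsI
    have h2pos := hpos2 s hsI
    have hlin : HasDerivAt (fun u => 2 * σ u + α * K) (2 * deriv σ s) s := by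
      simpa using ((hσ.const_mul 2).add_const (α * K))
    have hlog : HasDerivAt (fun u => Real.log (2 * σ u + α * K))
        (2 * deriv σ s / (2 * σ s + α * K)) s :=
by
      have := (Real.hasDerivAt_log h2pos.ne').comp s hlin
      simpa [Function.comp_def, div_eq_inv_mul] using this
    have hgd : HasDerivAt g
        (deriv σ s - (α * K / 2) * (2 * deriv σ s / (2 * σ s + α * K))
          + 2 * K * ((n:ℝ) - 1)) s := by
      have h := ((hσ.sub (hlog.const_mul (α * K / 2))).add
        ((hasDerivAt_id s).const_mul (2 * K * ((n:ℝ) - 1))))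
      rw [mul_one] at h
      exact h
    have heq : deriv σ s - (α * K / 2) * (2 * deriv σ s / (2 * σ s + α * K))
        + 2 * K * ((n:ℝ) - 1) = 0 := by
      rw [hODE s hsI]
      field_simp [hσpos.ne', h2pos.ne', show 2 * σ s + K * α ≠ 0 by rw [mul_comm K]; exact h2pos.ne']
      ring
    rwa [heq] at hgd
  have hcont : ContinuousOn g (Set.Icc 0 t) := fun s hs =>
    (hderiv s hs).continuousAt.continuousWithinAt
  have hconst := constant_of_has_deriv_right_zero hcont
    (fun s hs => (hderiv s (Set.Ico_subset_Icc_self hs)).hasDerivWithinAt)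
  have hgt : g t = g 0 := hconst t ⟨ht0, le_refl t⟩
  have h2pos := hpos2 t ⟨ht0, htT⟩
  rw [hg] at hgt
  simp only [hinit] at hgt
  rw [Real.log_div h2pos.ne' hαK.ne']
  norm_num at hgt
  linarith [hgt]
end
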